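/- Let 0 < θ < 1/2 be a real number. There exists a constant C > 0, depending only on θ, with the following property: for every finite field F with q elements and every integer r ≥ 3 such that q^r ≥ C, if M = ⌈2·log₂ r / log₂ q⌉ + 1, then every positive integer n with n ≤ 1 + θ·r·log₂ q satisfies n ≤ I_M, where I_M is the number of monic irreducible polynomials of degree M in F[X]. -/

import Mathlib

open Polynomial IntermediateField

private lemma geom_sum_le (q : ℕ) (hq : 2 ≤ q) : ∀ m, ∑ d ∈ Finset.Icc 1 m, q ^ d ≤ 2 * q ^ m := by
  intro m
  induction m with
  | zero => simp
  | succ m ih =>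
    rw [Finset.sum_Icc_succ_top (by omega)]
    have h2 : 2 * q ^ m ≤ q ^ (m + 1) := by
      calc 2 * q ^ m = q ^ m * 2 := by ring
      _ ≤ q ^ m * q := Nat.mul_le_mul_left _ hq
      _ = q ^ (m + 1) := (pow_succ q m).symm
    omega

private lemma lemA (F : Type) [Field F] [Fintype F] (M : ℕ) (hM : 1 ≤ M) :
    Fintype.card F ^ M ≤
      M * Nat.card {p : Polynomial F // p.Monic ∧ Irreducible p ∧ p.natDegree = M} +
        2 * Fintype.card F ^ (M / 2) := by
  classical
  set q := Fintype.card F with hqdef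
  have hq2 : 2 ≤ q := Fintype.one_lt_card
  obtain ⟨p, hchar⟩ := CharP.exists F
  obtain ⟨nn, hp, hqpn⟩ := FiniteField.card F p
  haveI := Fact.mk hp
  have hq' : q = p ^ (nn : ℕ) := hqpn
  have hqM0 : q ^ M ≠ 0 := by positivity
  have hqM1 : 1 < q ^ M := Nat.one_lt_pow (by omega) hq2
  set gp : F[X] := X ^ q ^ M - X with hgp
  set E := gp.SplittingField with hE
  have hne : gp ≠ 0 := FiniteField.X_pow_card_sub_X_ne_zero F hqM1
  haveI : CharP E p := (Algebra.charP_iff F E p).mp hchar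
  have hpdvd : p ∣ q ^ M := dvd_pow (hq' ▸ dvd_pow_self p nn.ne_zero) (by omega)
  have hsep : (X ^ q ^ M - X : E[X]).Separable := galois_poly_separable p _ hpdvd
  have hsepF : gp.Separable := galois_poly_separable p _ hpdvd
  have hsplits : Splits (gp.map (algebraMap F E)) := SplittingField.splits gp
  haveI : Finite E := Module.finite_of_finite F
  haveI : Fintype E := Fintype.ofFinite E
  have key : Fintype.card (gp.rootSet E) = q ^ M := by
    rw [card_rootSet_eq_natDegree hsepF hsplits, hgp,
      FiniteField.X_pow_card_sub_X_natDegree_eq F hqM1]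
  have hpow : q ^ M = p ^ ((nn : ℕ) * M) := by rw [hq', ← pow_mul]
  have huniv : gp.rootSet E = Set.univ := by
    rw [Set.eq_univ_iff_forall]
    suffices h : ∀ x ∈ (⊤ : Subalgebra F E), x ∈ gp.rootSet E by simpa using h
    rw [← SplittingField.adjoin_rootSet]
    simp_rw [Algebra.mem_adjoin_iff]
    intro x hx
    refine Subring.closure_induction ?_ ?_ ?_ ?_ ?_ ?_ hx <;> simp_rw [mem_rootSet_of_ne hne]
    · rintro x (⟨r, rfl⟩ | hx)
      · simp only [hgp, map_sub, map_pow, aeval_X]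
        rw [← map_pow, FiniteField.pow_card_pow, sub_self]
      · rwa [mem_rootSet_of_ne hne] at hx
    · simp [hgp, zero_pow hqM0]
    · simp [hgp]
    · simp only [hgp, aeval_X_pow, aeval_X, map_sub, sub_eq_zero]
      intro x y _ _ hx hy
      rw [hpow, add_pow_char_pow, ← hpow, hx, hy]
    · intro x _ hx
      simp only [hgp, sub_eq_zero, aeval_X_pow, aeval_X, map_sub, sub_neg_eq_add] at *
      rw [hpow, neg_pow, neg_one_pow_char_pow, ← hpow, hx]
      ring
    · simp only [hgp, aeval_X_pow, aeval_X, map_sub, mul_pow, sub_eq_zero]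
      intro x y _ _ hx hy
      rw [hx, hy]
  have cardE : Fintype.card E = q ^ M := by
    rw [← key]
    exact (Fintype.card_congr ((Equiv.setCongr huniv).trans (Equiv.Set.univ E))).symm
  have hfr : Module.finrank F E = M := by
    have h1 : Fintype.card E = q ^ Module.finrank F E := Module.card_eq_pow_finrank
    rw [cardE] at h1
    exact (Nat.pow_right_injective hq2 h1.symm)
  -- degree function
  have hint : ∀ α : E, IsIntegral F α := fun α => IsIntegral.of_finite F α
  set D : E → ℕ := fun α => (minpoly F α).natDegree with hD
  have hDpos : ∀ α : E, 1 ≤ D α := fun α => minpoly.natDegree_pos (hint α)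
  have hDdvd : ∀ α : E, D α ∣ M := by
    intro α
    simp only [hD]
    rw [← hfr, ← IntermediateField.adjoin.finrank (hint α)]
    exact ⟨Module.finrank F⟮α⟯ E, (Module.finrank_mul_finrank F F⟮α⟯ E).symm⟩
  have hDfix : ∀ α : E, α ^ q ^ D α = α := by
    intro α
    haveI : Fintype F⟮α⟯ := Fintype.ofFinite _
    have hcardK : Fintype.card F⟮α⟯ = q ^ D α := by
      rw [Module.card_eq_pow_finrank (K := F) (V := F⟮α⟯), IntermediateField.adjoin.finrank (hint α)]
    have hgen : (IntermediateField.AdjoinSimple.gen F α) ^ (q ^ D α)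
        = IntermediateField.AdjoinSimple.gen F α := by
      rw [← hcardK]; exact FiniteField.pow_card _
    have := congrArg (fun z : F⟮α⟯ => (z : E)) hgen
    simpa using this
  -- bad sets
  set B : ℕ → Finset E := fun d => Finset.univ.filter (fun α => α ^ q ^ d = α) with hBdef
  have hB : ∀ d, 1 ≤ d → (B d).card ≤ q ^ d := by
    intro d hd
    have hqd1 : 1 < q ^ d := Nat.one_lt_pow (by omega) hq2
    have hne' : (X ^ q ^ d - X : E[X]) ≠ 0 := FiniteField.X_pow_card_sub_X_ne_zero E hqd1
    have hsub : B d ⊆ (X ^ q ^ d - X : E[X]).roots.toFinset := by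
      intro α hα
      rw [hBdef, Finset.mem_filter] at hα
      rw [Multiset.mem_toFinset, mem_roots hne']
      simp [IsRoot, hα.2]
    calc (B d).card ≤ (X ^ q ^ d - X : E[X]).roots.toFinset.card := Finset.card_le_card hsub
    _ ≤ Multiset.card (X ^ q ^ d - X : E[X]).roots := Multiset.toFinset_card_le _
    _ ≤ (X ^ q ^ d - X : E[X]).natDegree := card_roots' _
    _ = q ^ d := FiniteField.X_pow_card_sub_X_natDegree_eq E hqd1
  -- good set
  set G : Finset E := Finset.univ.filter (fun α => D α = M) with hGdef
  set f : E → F[X] := fun α => minpoly F α with hf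
  set T : Finset F[X] := G.image f with hT
  have hTmem : ∀ b ∈ T, b.Monic ∧ Irreducible b ∧ b.natDegree = M := by
    intro b hb
    rw [hT, Finset.mem_image] at hb
    obtain ⟨α, hα, rfl⟩ := hb
    rw [hGdef, Finset.mem_filter] at hα
    exact ⟨minpoly.monic (hint α), minpoly.irreducible (hint α), hα.2⟩
  have hGT : G.card ≤ M * T.card := by
    apply Finset.card_le_mul_card_image
    intro b hb
    obtain ⟨hmon, hirr, hdeg⟩ := hTmem b hb
    have hbne : b ≠ 0 := hmon.ne_zero
    have hbmapne : b.map (algebraMap F E) ≠ 0 := Polynomial.map_ne_zero hbne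
    have hsub : G.filter (fun α => f α = b) ⊆ (b.map (algebraMap F E)).roots.toFinset := by
      intro α hα
      rw [Finset.mem_filter] at hα
      rw [Multiset.mem_toFinset, mem_roots hbmapne]
      show Polynomial.eval α (b.map (algebraMap F E)) = 0
      rw [Polynomial.eval_map, ← Polynomial.aeval_def, ← hα.2]
      simp only [hf]
      exact minpoly.aeval F α
    calc (G.filter (fun α => f α = b)).card
        ≤ (b.map (algebraMap F E)).roots.toFinset.card := Finset.card_le_card hsub
      _ ≤ Multiset.card (b.map (algebraMap F E)).roots := Multiset.toFinset_card_le _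
      _ ≤ (b.map (algebraMap F E)).natDegree := card_roots' _
      _ = M := by rw [natDegree_map, hdeg]
  -- the subtype is finite and T.card bounds Nat.card
  set S := {P : Polynomial F // P.Monic ∧ Irreducible P ∧ P.natDegree = M} with hS
  haveI hSfin : Finite S := by
    apply Finite.of_injective (fun s : S => (fun i : Fin (M + 1) => (s.1).coeff i))
    rintro ⟨a, ha⟩ ⟨b, hb⟩ h
    refine Subtype.ext (Polynomial.ext fun i => ?_)
    by_cases hi : i ≤ M
    · exact congrFun h ⟨i, by omega⟩
    · rw [Polynomial.coeff_eq_zero_of_natDegree_lt (by omega : a.natDegree < i),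
        Polynomial.coeff_eq_zero_of_natDegree_lt (by omega : b.natDegree < i)]
  have hTS : T.card ≤ Nat.card S := by
    haveI : Fintype S := Fintype.ofFinite S
    rw [Nat.card_eq_fintype_card]
    rw [← Fintype.card_coe T]
    apply Fintype.card_le_of_injective (fun t : {x // x ∈ T} => (⟨t.1, hTmem t.1 t.2⟩ : S))
    rintro ⟨a, ha⟩ ⟨b, hb⟩ h
    simpa using congrArg Subtype.val h
  -- cover
  have hcover : (Finset.univ : Finset E) ⊆ G ∪ (Finset.Icc 1 (M / 2)).biUnion B := by
    intro α _
    by_cases hα : D α = M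
    · exact Finset.mem_union_left _ (by rw [hGdef]; simp [hα])
    · apply Finset.mem_union_right
      rw [Finset.mem_biUnion]
      refine ⟨D α, ?_, by rw [hBdef]; simp [hDfix α]⟩
      rw [Finset.mem_Icc]
      obtain ⟨k, hk⟩ := hDdvd α
      have hk2 : 2 ≤ k := by
        rcases Nat.lt_or_ge k 2 with h | h
        · interval_cases k <;> omega
        · exact h
      constructor
      · exact hDpos α
      · rw [Nat.le_div_iff_mul_le (by omega)]
        calc D α * 2 ≤ D α * k := Nat.mul_le_mul_left _ hk2
        _ = M := hk.symm
  -- put it together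
  calc q ^ M = Fintype.card E := cardE.symm
    _ = (Finset.univ : Finset E).card := (Finset.card_univ).symm
    _ ≤ (G ∪ (Finset.Icc 1 (M / 2)).biUnion B).card := Finset.card_le_card hcover
    _ ≤ G.card + ((Finset.Icc 1 (M / 2)).biUnion B).card := Finset.card_union_le _ _
    _ ≤ G.card + ∑ d ∈ Finset.Icc 1 (M / 2), (B d).card :=
        Nat.add_le_add_left (Finset.card_biUnion_le) _
    _ ≤ M * T.card + ∑ d ∈ Finset.Icc 1 (M / 2), q ^ d := by
        apply Nat.add_le_add hGT
        apply Finset.sum_le_sum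
        intro d hd
        exact hB d (Finset.mem_Icc.mp hd).1
    _ ≤ M * Nat.card S + 2 * q ^ (M / 2) := by
        apply Nat.add_le_add
        · exact Nat.mul_le_mul_left _ hTS
        · exact geom_sum_le q hq2 _


private lemma pow8_le (r : ℕ) (hr : 64 ≤ r) : r ^ 8 ≤ 2 ^ r := by
  induction r with
  | zero => omega
  | succ m ih =>
    rcases Nat.lt_or_ge m 64 with h | h
    · have hm : m = 63 := by omega
      subst hm
      norm_num
    · have h1 := ih h
      have key : 16 ^ 8 * (m + 1) ^ 8 ≤ 16 ^ 8 * (2 * m ^ 8) := by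
        calc 16 ^ 8 * (m + 1) ^ 8 = (16 * (m + 1)) ^ 8 := by ring
          _ ≤ (17 * m) ^ 8 := Nat.pow_le_pow_left (by omega) 8
          _ = 17 ^ 8 * m ^ 8 := by ring
          _ ≤ (16 ^ 8 * 2) * m ^ 8 := Nat.mul_le_mul_right _ (by norm_num)
          _ = 16 ^ 8 * (2 * m ^ 8) := by ring
      have h2 : (m + 1) ^ 8 ≤ 2 * m ^ 8 := Nat.le_of_mul_le_mul_left key (by norm_num)
      calc (m + 1) ^ 8 ≤ 2 * m ^ 8 := h2
        _ ≤ 2 * 2 ^ m := Nat.mul_le_mul_left _ h1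
        _ = 2 ^ (m + 1) := by rw [pow_succ]; ring

private lemma pow4_le (r : ℕ) (hr : 16 ≤ r) : r ^ 4 ≤ 2 ^ r := by
  induction r with
  | zero => omega
  | succ m ih =>
    rcases Nat.lt_or_ge m 16 with h | h
    · have hm : m = 15 := by omega
      subst hm
      norm_num
    · have h1 := ih h
      have key : 16 ^ 4 * (m + 1) ^ 4 ≤ 16 ^ 4 * (2 * m ^ 4) := by
        calc 16 ^ 4 * (m + 1) ^ 4 = (16 * (m + 1)) ^ 4 := by ring
          _ ≤ (17 * m) ^ 4 := Nat.pow_le_pow_left (by omega) 4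
          _ = 17 ^ 4 * m ^ 4 := by ring
          _ ≤ (16 ^ 4 * 2) * m ^ 4 := Nat.mul_le_mul_right _ (by norm_num)
          _ = 16 ^ 4 * (2 * m ^ 4) := by ring
      have h2 : (m + 1) ^ 4 ≤ 2 * m ^ 4 := Nat.le_of_mul_le_mul_left key (by norm_num)
      calc (m + 1) ^ 4 ≤ 2 * m ^ 4 := h2
        _ ≤ 2 * 2 ^ m := Nat.mul_le_mul_left _ h1
        _ = 2 ^ (m + 1) := by rw [pow_succ]; ring

private lemma logb_mul_le {a k : ℕ} (ha : 1 ≤ a) (h : a ^ k ≤ 2 ^ a) :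
    (k : ℝ) * Real.logb 2 a ≤ a := by
  have hapos : (0 : ℝ) < a := by exact_mod_cast ha
  have h1 : ((a : ℝ)) ^ k ≤ (2 : ℝ) ^ (a : ℕ) := by exact_mod_cast h
  calc (k : ℝ) * Real.logb 2 a = Real.logb 2 ((a : ℝ) ^ k) := (Real.logb_pow 2 a k).symm
    _ ≤ Real.logb 2 ((2 : ℝ) ^ (a : ℕ)) :=
        Real.logb_le_logb_of_le (by norm_num) (by positivity) h1
    _ = a := by
        rw [← Real.rpow_natCast 2 a, Real.logb_rpow (by norm_num) (by norm_num)]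

private lemma logb_le_of_le_pow2 {x : ℝ} (hx : 0 < x) {k : ℕ} (h : x ≤ 2 ^ k) :
    Real.logb 2 x ≤ k := by
  rw [Real.logb_le_iff_le_rpow (by norm_num) hx]
  rwa [Real.rpow_natCast]

private lemma le_logb_of_pow2_le {x : ℝ} (hx : 0 < x) {k : ℕ} (h : (2 : ℝ) ^ k ≤ x) :
    (k : ℝ) ≤ Real.logb 2 x := by
  rw [Real.le_logb_iff_rpow_le (by norm_num) hx]
  rwa [Real.rpow_natCast]

set_option maxHeartbeats 4000000 in
/-- Lemma `pre1`: for `0 < θ < 1/2` there is a constant `C > 0` such that for every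
finite field with `q` elements and every `r ≥ 3` with `q^r ≥ C`, setting
`M = ⌈2 log₂ r / log₂ q⌉ + 1`, every positive integer `n ≤ 1 + θ r log₂ q` satisfies
`n ≤ I_M`, the number of monic irreducible polynomials of degree `M`. -/
theorem stmt_2 (θ : ℝ) (hθ0 : 0 < θ) (hθ1 : θ < 1 / 2) :
    ∃ C : ℝ, 0 < C ∧
      ∀ (F : Type) [Field F] [Fintype F] (q r : ℕ),
        q = Fintype.card F → 3 ≤ r → C ≤ (q : ℝ) ^ r →
          ∀ n : ℕ, 0 < n → (n : ℝ) ≤ 1 + θ * r * Real.logb 2 q →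
            n ≤ Nat.card {p : Polynomial F // p.Monic ∧ Irreducible p ∧
                  p.natDegree = ⌈2 * Real.logb 2 r / Real.logb 2 q⌉₊ + 1} := by
  refine ⟨(16 : ℝ) ^ 64, by positivity, ?_⟩
  intro F _ _ q r hq hr3 hC n hn hnle
  classical
  have hq2 : 2 ≤ q := hq ▸ Fintype.one_lt_card
  set L : ℝ := Real.logb 2 q with hLdef
  set R : ℝ := Real.logb 2 r with hRdef
  set M : ℕ := ⌈2 * R / L⌉₊ + 1 with hMdef
  have hqpos : (0 : ℝ) < q := by positivity
  have hrpos : (0 : ℝ) < r := by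
    have : (3 : ℝ) ≤ r := by exact_mod_cast hr3
    linarith
  have hq2R : (2 : ℝ) ≤ q := by exact_mod_cast hq2
  have hr3R : (3 : ℝ) ≤ r := by exact_mod_cast hr3
  have hL1 : 1 ≤ L := by
    have := le_logb_of_pow2_le hqpos (k := 1) (by rw [pow_one]; exact hq2R)
    simpa using this
  have hLpos : (0 : ℝ) < L := by linarith
  have hRpos : (0 : ℝ) < R := Real.logb_pos (by norm_num) (by linarith)
  -- if q ≤ 15 then r ≥ 64
  have hr64 : q ≤ 15 → 64 ≤ r := by
    intro hq15
    by_contra hcon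
    push_neg at hcon
    have h1 : (q : ℝ) ^ r ≤ (15 : ℝ) ^ r := by
      apply pow_le_pow_left₀ (by positivity)
      exact_mod_cast hq15
    have h2 : (15 : ℝ) ^ r ≤ (15 : ℝ) ^ 63 := by
      apply pow_le_pow_right₀ (by norm_num)
      omega
    have : (16 : ℝ) ^ 64 ≤ (15 : ℝ) ^ 63 := le_trans hC (le_trans h1 h2)
    norm_num at this
  -- ceil bounds
  have hceil_lb : 2 * R / L ≤ (⌈2 * R / L⌉₊ : ℝ) := Nat.le_ceil _
  have hM_ub : (M : ℝ) ≤ 2 * R / L + 2 := by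
    have h := Nat.ceil_lt_add_one (show (0 : ℝ) ≤ 2 * R / L by positivity)
    rw [hMdef]
    push_cast
    linarith
  -- q ^ M ≥ q * r ^ 2
  have hq_eq : (q : ℝ) = (2 : ℝ) ^ L := (Real.rpow_logb (by norm_num) (by norm_num) hqpos).symm
  have hr_eq : (r : ℝ) = (2 : ℝ) ^ R := (Real.rpow_logb (by norm_num) (by norm_num) hrpos).symm
  have hqM_lb : (q : ℝ) * r ^ 2 ≤ (q : ℝ) ^ M := by
    have hk : (r : ℝ) ^ 2 ≤ (q : ℝ) ^ (⌈2 * R / L⌉₊ : ℕ) := by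
      have e1 : (q : ℝ) ^ ((2 * R / L : ℝ)) = (r : ℝ) ^ 2 := by
        have hcancel : L * (2 * R / L) = 2 * R := by field_simp
        have e2 : (2 : ℝ) ^ (2 * R) = ((2 : ℝ) ^ R) ^ (2 : ℕ) := by
          rw [show (2 : ℝ) * R = R * ((2 : ℕ) : ℝ) by push_cast; ring,
            Real.rpow_mul (by norm_num : (0:ℝ) ≤ 2), Real.rpow_natCast]
        rw [hq_eq, ← Real.rpow_mul (by norm_num : (0:ℝ) ≤ 2), hcancel, e2, ← hr_eq]
      calc (r : ℝ) ^ 2 = (q : ℝ) ^ ((2 * R / L : ℝ)) := e1.symm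
        _ ≤ (q : ℝ) ^ ((⌈2 * R / L⌉₊ : ℕ) : ℝ) :=
            Real.rpow_le_rpow_of_exponent_le (by linarith) hceil_lb
        _ = (q : ℝ) ^ (⌈2 * R / L⌉₊ : ℕ) := Real.rpow_natCast _ _
    calc (q : ℝ) * r ^ 2 = (r : ℝ) ^ 2 * q := by ring
      _ ≤ (q : ℝ) ^ (⌈2 * R / L⌉₊ : ℕ) * q := by
          apply mul_le_mul_of_nonneg_right hk (by positivity)
      _ = (q : ℝ) ^ M := by rw [hMdef, pow_succ]
  -- main analytic inequality
  have hmain : 2 * (M : ℝ) * n ≤ (q : ℝ) * r ^ 2 := by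
    have hn' : (n : ℝ) ≤ 1 + r * L / 2 := by
      have hrL : 0 ≤ (r : ℝ) * L := by positivity
      nlinarith
    have e1 : 2 * (M : ℝ) * n ≤ 2 * ((2 * R / L + 2) * (1 + r * L / 2)) := by
      have h := mul_le_mul hM_ub hn' (by positivity) (by positivity)
      nlinarith
    have e2 : (2 * R / L + 2) * (1 + r * L / 2) = 2 * R / L + R * r + 2 + r * L := by
      field_simp
      ring
    have e3 : 2 * R / L ≤ 2 * R := by
      apply div_le_self (by positivity) hL1
    rw [e2] at e1
    have hRr : R ≤ r := by
      have h := logb_mul_le (a := r) (k := 1) (by omega) (by simpa using (show r < 2 ^ r from Nat.lt_two_pow_self).le)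
      rw [← hRdef] at h
      push_cast at h
      linarith
    rcases le_or_gt 16 q with hq16 | hq16
    · have hLq : 4 * L ≤ q := by
        have h := logb_mul_le (a := q) (k := 4) (by omega) (pow4_le q hq16)
        rw [← hLdef] at h
        push_cast at h
        linarith
      have hq16R : (16 : ℝ) ≤ q := by exact_mod_cast hq16
      have f1 : 2 * (R * r) ≤ 2 * (r * r) :=
        by nlinarith [mul_le_mul_of_nonneg_right hRr (le_of_lt hrpos)]
      have f2 : 2 * (r * L) ≤ r * q / 2 := by nlinarith [mul_le_mul_of_nonneg_left hLq (le_of_lt hrpos)]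
      have f3 : (16 : ℝ) * (r ^ 2 - r / 2) ≤ q * (r ^ 2 - r / 2) := by
        apply mul_le_mul_of_nonneg_right hq16R
        nlinarith
      nlinarith [f1, f2, f3, e1, e3, hRr, sq_nonneg ((r : ℝ) - 3)]
    · have h64 : 64 ≤ r := hr64 (by omega)
      have h64R : (64 : ℝ) ≤ r := by exact_mod_cast h64
      have hR8 : 8 * R ≤ r := by
        have h := logb_mul_le (a := r) (k := 8) (by omega) (pow8_le r h64)
        rw [← hRdef] at h
        push_cast at h
        linarith
      have hL4 : L ≤ 4 := by
        have h : (q : ℝ) ≤ 2 ^ (4 : ℕ) := by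
          have : (q : ℝ) ≤ 16 := by exact_mod_cast (by omega : q ≤ 16)
          norm_num
          linarith
        have h2 := logb_le_of_le_pow2 hqpos h
        rw [← hLdef] at h2
        push_cast at h2
        linarith
      have f1 : 8 * (R * r) ≤ r * r :=
        by nlinarith [mul_le_mul_of_nonneg_right hR8 (le_of_lt hrpos)]
      have f2 : 2 * (r * L) ≤ 8 * r := by nlinarith [mul_le_mul_of_nonneg_left hL4 (le_of_lt hrpos)]
      have f3 : (2 : ℝ) * r ^ 2 ≤ q * r ^ 2 :=
        mul_le_mul_of_nonneg_right hq2R (sq_nonneg _)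
      nlinarith [f1, f2, f3, e1, e3, hRr, sq_nonneg ((r : ℝ) - 64)]
  -- conclude 2 * M * n ≤ q ^ M in ℕ
  have h2Mn : 2 * (M * n) ≤ q ^ M := by
    have hreal : ((2 * (M * n) : ℕ) : ℝ) ≤ ((q ^ M : ℕ) : ℝ) := by
      have ha : ((2 * (M * n) : ℕ) : ℝ) = 2 * (M : ℝ) * n := by push_cast; ring
      have hb : ((q ^ M : ℕ) : ℝ) = (q : ℝ) ^ M := by push_cast; ring
      rw [ha, hb]
      exact le_trans hmain hqM_lb
    exact_mod_cast hreal
  -- 4 ≤ q ^ (M / 2)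
  have hMge2 : 2 ≤ M := by
    have : 1 ≤ ⌈2 * R / L⌉₊ := Nat.ceil_pos.mpr (by positivity)
    omega
  have hm4 : 4 ≤ q ^ (M / 2) := by
    rcases le_or_gt 4 q with h4 | h4
    · calc 4 ≤ q := h4
        _ = q ^ 1 := (pow_one q).symm
        _ ≤ q ^ (M / 2) := Nat.pow_le_pow_right (by omega) (by omega)
    · have h64 : 64 ≤ r := hr64 (by omega)
      have hR6 : (6 : ℝ) ≤ R := by
        have hle : ((2 : ℝ)) ^ (6 : ℕ) ≤ r := by
          have : (64 : ℝ) ≤ r := by exact_mod_cast h64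
          norm_num
          linarith
        have h := le_logb_of_pow2_le hrpos hle
        rw [← hRdef] at h
        push_cast at h
        linarith
      have hL2 : L ≤ 2 := by
        have hle : (q : ℝ) ≤ 2 ^ (2 : ℕ) := by
          have : (q : ℝ) ≤ 4 := by exact_mod_cast (by omega : q ≤ 4)
          norm_num
          linarith
        have h := logb_le_of_le_pow2 hqpos hle
        rw [← hLdef] at h
        push_cast at h
        linarith
      have hlt : (2 : ℝ) < 2 * R / L := by
        rw [lt_div_iff₀ hLpos]
        nlinarith
      have hceil3 : 3 ≤ ⌈2 * R / L⌉₊ := by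
        have := Nat.lt_ceil.mpr (show ((2 : ℕ) : ℝ) < 2 * R / L by exact_mod_cast hlt)
        omega
      have hM4 : 4 ≤ M := by omega
      calc (4 : ℕ) = 2 ^ 2 := by norm_num
        _ ≤ q ^ 2 := Nat.pow_le_pow_left hq2 2
        _ ≤ q ^ (M / 2) := Nat.pow_le_pow_right (by omega) (by omega)
  have h4qm : 4 * q ^ (M / 2) ≤ q ^ M := by
    calc 4 * q ^ (M / 2) ≤ q ^ (M / 2) * q ^ (M / 2) := Nat.mul_le_mul_right _ hm4
      _ = q ^ (M / 2 + M / 2) := (pow_add q _ _).symm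
      _ ≤ q ^ M := Nat.pow_le_pow_right (by omega) (by omega)
  have hA := lemA F M (by omega)
  rw [← hq] at hA
  have final : M * n ≤
      M * Nat.card {p : Polynomial F // p.Monic ∧ Irreducible p ∧ p.natDegree = M} := by
    linarith [hA, h4qm, h2Mn]
  exact Nat.le_of_mul_le_mul_left final (by omega)
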